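/- If I is an independent set of G that does not contain vertex v and |I| ≥ α(G) where α(G) is the maximum size of an independent set, then I contains at least two vertices of N(v), unless there exists a maximum independent set of G containing v of the same size. More precisely: if no maximum independent set of G contains v, then every maximum independent set I satisfies |I ∩ N(v)| ≥ 2. -/

import Mathlib

variable {V : Type*} [Fintype V] [DecidableEq V]

def IsIndep (G : SimpleGraph V) (I : Finset V) : Prop :=
  ∀ u ∈ I, ∀ v ∈ I, ¬ G.Adj u v

def IsMaxIndep (G : SimpleGraph V) (I : Finset V) : Prop :=
  IsIndep G I ∧ ∀ J : Finset V, IsIndep G J → J.card ≤ I.card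

theorem packing_constraint (G : SimpleGraph V) [DecidableRel G.Adj] (v : V)
    (hv : ¬ ∃ I : Finset V, IsMaxIndep G I ∧ v ∈ I) :
    ∀ I : Finset V, IsMaxIndep G I → 2 ≤ (I ∩ G.neighborFinset v).card := by
  intro I hI
  have hvI : v ∉ I := fun h => hv ⟨I, hI, h⟩
  by_contra hlt
  push_neg at hlt
  interval_cases h : (I ∩ G.neighborFinset v).card
  · -- no neighbor in I: I ∪ {v} is independent, bigger
    have hempty : I ∩ G.neighborFinset v = ∅ := Finset.card_eq_zero.mp h
    have hindep : IsIndep G (insert v I) := by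
      intro a ha b hb hab
      rcases Finset.mem_insert.mp ha with ha' | ha'
      · subst ha'
        rcases Finset.mem_insert.mp hb with hb' | hb'
        · subst hb'; exact G.loopless.irrefl _ hab
        · have : b ∈ I ∩ G.neighborFinset a :=
            Finset.mem_inter.mpr ⟨hb', by rw [SimpleGraph.mem_neighborFinset]; exact hab⟩
          simp [hempty] at this
      · rcases Finset.mem_insert.mp hb with hb' | hb'
        · subst hb'
          have : a ∈ I ∩ G.neighborFinset b :=
            Finset.mem_inter.mpr ⟨ha', by rw [SimpleGraph.mem_neighborFinset]; exact hab.symm⟩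
          simp [hempty] at this
        · exact hI.1 a ha' b hb' hab
    have := hI.2 _ hindep
    rw [Finset.card_insert_of_notMem hvI] at this
    omega
  · -- exactly one neighbor u: (I \ {u}) ∪ {v} is max indep containing v
    obtain ⟨u, hu⟩ := Finset.card_eq_one.mp h
    have huI : u ∈ I ∧ u ∈ G.neighborFinset v := by
      have : u ∈ I ∩ G.neighborFinset v := by simp [hu]
      exact Finset.mem_inter.mp this
    set J := insert v (I.erase u) with hJ
    have hvJ : v ∈ J := Finset.mem_insert_self _ _
    have honly : ∀ w ∈ I, G.Adj v w → w = u := by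
      intro w hw hadj
      have : w ∈ I ∩ G.neighborFinset v :=
        Finset.mem_inter.mpr ⟨hw, (G.mem_neighborFinset _ _).mpr hadj⟩
      rw [hu] at this; simpa using this
    have hindep : IsIndep G J := by
      intro a ha b hb hab
      rcases Finset.mem_insert.mp ha with ha' | ha'
      · subst ha'
        rcases Finset.mem_insert.mp hb with hb' | hb'
        · subst hb'; exact G.loopless.irrefl _ hab
        · have := honly b (Finset.mem_of_mem_erase hb') hab
          exact (Finset.ne_of_mem_erase hb') this
      · rcases Finset.mem_insert.mp hb with hb' | hb'
        · subst hb'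
          have := honly a (Finset.mem_of_mem_erase ha') hab.symm
          exact (Finset.ne_of_mem_erase ha') this
        · exact hI.1 a (Finset.mem_of_mem_erase ha') b (Finset.mem_of_mem_erase hb') hab
    have hcard : J.card = I.card := by
      have hvne : v ∉ I.erase u := fun h => hvI (Finset.mem_of_mem_erase h)
      rw [hJ, Finset.card_insert_of_notMem hvne, Finset.card_erase_of_mem huI.1]
      have : 1 ≤ I.card := Finset.card_pos.mpr ⟨u, huI.1⟩
      omega
    exact hv ⟨J, ⟨hindep, fun K hK => hcard ▸ hI.2 K hK⟩, hvJ⟩
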